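/- Let A be a unital complex C*-algebra and let a, r ∈ A both be selfadjoint. Let f : ℝ → ℂ be a bounded continuous integrable function such that p ↦ p·f̂(p) is integrable. Then ‖f(a + r) − f(a)‖ ≤ (2π)^{−1/2} · ‖r‖ · ∫_ℝ |p·f̂(p)| dp, where f(a) and f(a+r) denote the continuous functional calculus of the selfadjoint elements a and a + r applied to f. -/

import Mathlib

open MeasureTheory

/-- The Fourier transform `f̂(p) = (2π)^{-1/2} ∫ f(x) e^{-ixp} dx` of a function `f : ℝ → ℂ`. -/
noncomputable def fourierHat (f : ℝ → ℂ) (p : ℝ) : ℂ :=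
  (Real.sqrt (2 * Real.pi) : ℂ)⁻¹ * ∫ x : ℝ, f x * Complex.exp (-(Complex.I * x * p))

namespace NormCfcPerturbation

open Complex NormedSpace
open scoped FourierTransform

lemma sqrt_two_pi_pos : 0 < Real.sqrt (2 * Real.pi) :=
  Real.sqrt_pos.mpr (by positivity)

lemma sq_sqrt_two_pi : (Real.sqrt (2 * Real.pi)) * (Real.sqrt (2 * Real.pi)) = 2 * Real.pi :=
  Real.mul_self_sqrt (by positivity)

lemma fourierHat_eq_fourierIntegral (f : ℝ → ℂ) (p : ℝ) :
    fourierHat f p = (Real.sqrt (2 * Real.pi) : ℂ)⁻¹ * 𝓕 f (p / (2 * Real.pi)) := by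
  rw [fourierHat, Real.fourier_real_eq_integral_exp_smul]
  congr 1
  refine congrArg (integral volume) (funext fun x => ?_)
  have h1 : -2 * Real.pi * x * (p / (2 * Real.pi)) = -(x * p) := by
    field_simp
  rw [h1, smul_eq_mul, mul_comm]
  congr 1
  push_cast
  ring

lemma fourierIntegral_eq_fourierHat (f : ℝ → ℂ) (w : ℝ) :
    𝓕 f w = (Real.sqrt (2 * Real.pi) : ℂ) * fourierHat f (2 * Real.pi * w) := by
  rw [fourierHat_eq_fourierIntegral]
  have h2π : (2 * Real.pi) ≠ 0 := by positivity
  rw [mul_div_cancel_left₀ _ h2π, ← mul_assoc,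
    mul_inv_cancel₀ (by exact_mod_cast sqrt_two_pi_pos.ne'), one_mul]

lemma fourierHat_continuous {f : ℝ → ℂ} (hf : Integrable f) : Continuous (fourierHat f) := by
  have h : Continuous (𝓕 f) :=
    VectorFourier.fourierIntegral_continuous Real.continuous_fourierChar
      (by exact continuous_inner) hf
  simp only [funext (fourierHat_eq_fourierIntegral f)]
  fun_prop

lemma fourierHat_norm_le {f : ℝ → ℂ} (hf : Integrable f) (p : ℝ) :
    ‖fourierHat f p‖ ≤ (Real.sqrt (2 * Real.pi))⁻¹ * ∫ x, ‖f x‖ := by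
  rw [fourierHat, norm_mul]
  have h1 : ‖((Real.sqrt (2 * Real.pi) : ℝ) : ℂ)⁻¹‖ = (Real.sqrt (2 * Real.pi))⁻¹ := by
    rw [norm_inv, Complex.norm_real, Real.norm_eq_abs, abs_of_pos sqrt_two_pi_pos]
  rw [h1]
  gcongr
  refine (norm_integral_le_integral_norm _).trans (le_of_eq ?_)
  refine congrArg (integral volume) (funext fun x => ?_)
  rw [norm_mul]
  have : ‖Complex.exp (-(Complex.I * x * p))‖ = 1 := by
    rw [Complex.norm_exp]
    simp
  rw [this, mul_one]

lemma fourierHat_integrable {f : ℝ → ℂ} (hf : Integrable f)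
    (hp : Integrable (fun p : ℝ => (p : ℂ) * fourierHat f p)) :
    Integrable (fourierHat f) := by
  set M : ℝ := (Real.sqrt (2 * Real.pi))⁻¹ * ∫ x, ‖f x‖ with hM
  have hMnn : 0 ≤ M := (norm_nonneg _).trans (fourierHat_norm_le hf 0)
  have hD : Integrable (fun p : ℝ =>
      (Set.Icc (-1 : ℝ) 1).indicator (fun _ => M) p + ‖(p : ℂ) * fourierHat f p‖) := by
    refine Integrable.add ?_ hp.norm
    rw [integrable_indicator_iff measurableSet_Icc]
    exact integrableOn_const measure_Icc_lt_top.ne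
  refine hD.mono' (fourierHat_continuous hf).aestronglyMeasurable (ae_of_all _ fun p => ?_)
  rcases le_or_gt |p| 1 with h | h
  · have hmem : p ∈ Set.Icc (-1 : ℝ) 1 := by
      rw [Set.mem_Icc]
      constructor <;> [linarith [neg_abs_le p]; linarith [le_abs_self p]]
    rw [Set.indicator_of_mem hmem]
    have := fourierHat_norm_le hf p
    exact le_add_of_le_of_nonneg (this.trans_eq hM.symm) (norm_nonneg _)
  · refine le_add_of_nonneg_of_le (Set.indicator_nonneg (fun _ _ => hMnn) p) ?_
    rw [norm_mul, Complex.norm_real, Real.norm_eq_abs]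
    nlinarith [norm_nonneg (fourierHat f p)]

lemma fourierIntegral_integrable {f : ℝ → ℂ} (hf : Integrable f)
    (hp : Integrable (fun p : ℝ => (p : ℂ) * fourierHat f p)) :
    Integrable (𝓕 f) := by
  have h2π : (2 * Real.pi) ≠ 0 := by positivity
  have h1 : Integrable (fun w : ℝ => fourierHat f (2 * Real.pi * w)) :=
    (integrable_comp_mul_left_iff (fourierHat f) h2π).mpr (fourierHat_integrable hf hp)
  have h2 : Integrable (fun w : ℝ =>
      (Real.sqrt (2 * Real.pi) : ℂ) * fourierHat f (2 * Real.pi * w)) := h1.const_mul _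
  exact h2.congr (ae_of_all _ fun w => (fourierIntegral_eq_fourierHat f w).symm)

/-- Fourier inversion in our normalization. -/
lemma fourierHat_inversion {f : ℝ → ℂ} (hf_cont : Continuous f) (hf : Integrable f)
    (hp : Integrable (fun p : ℝ => (p : ℂ) * fourierHat f p)) (x : ℝ) :
    (Real.sqrt (2 * Real.pi) : ℂ)⁻¹ * ∫ p : ℝ, fourierHat f p * Complex.exp ((p : ℂ) * Complex.I * x)
      = f x := by
  have h2π : (0:ℝ) < 2 * Real.pi := by positivity
  have hFint := fourierIntegral_integrable hf hp
  have hinv : 𝓕⁻ (𝓕 f) x = f x := by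
    rw [hf_cont.fourierInv_fourier_eq hf hFint]
  have hinv2 : (∫ ξ : ℝ, Complex.exp ((2 * Real.pi * ξ * x : ℝ) * Complex.I) * 𝓕 f ξ) = f x := by
    rw [← hinv, Real.fourierInv_eq_fourier_neg,
      Real.fourier_real_eq_integral_exp_smul]
    refine congrArg (integral volume) (funext fun ξ => ?_)
    rw [smul_eq_mul]
    norm_num
  set g : ℝ → ℂ := fun ξ => Complex.exp ((2 * Real.pi * ξ * x : ℝ) * Complex.I) * 𝓕 f ξ with hg
  have hcomp : (∫ p : ℝ, g (p / (2 * Real.pi))) = (2 * Real.pi) • ∫ ξ, g ξ := by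
    rw [MeasureTheory.Measure.integral_comp_div g (2 * Real.pi), abs_of_pos h2π]
  have hgval : ∀ p : ℝ, g (p / (2 * Real.pi)) =
      (Real.sqrt (2 * Real.pi) : ℂ) * (fourierHat f p * Complex.exp ((p : ℂ) * Complex.I * x)) := by
    intro p
    rw [hg]
    simp only
    rw [fourierIntegral_eq_fourierHat f (p / (2 * Real.pi)),
      mul_div_cancel₀ _ (ne_of_gt h2π)]
    have harg : ((p * x : ℝ) : ℂ) * Complex.I = (p : ℂ) * Complex.I * x := by
      push_cast
      ring
    rw [harg]
    ring
  have hL : (∫ p : ℝ, g (p / (2 * Real.pi)))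
      = (Real.sqrt (2 * Real.pi) : ℂ) * ∫ p : ℝ, fourierHat f p * Complex.exp ((p : ℂ) * Complex.I * x) := by
    rw [show (fun p : ℝ => g (p / (2 * Real.pi))) = fun p : ℝ =>
        (Real.sqrt (2 * Real.pi) : ℂ) * (fourierHat f p * Complex.exp ((p : ℂ) * Complex.I * x))
      from funext hgval]
    exact integral_const_mul _ _
  rw [hL, hinv2] at hcomp
  have hs : ((Real.sqrt (2 * Real.pi) : ℝ) : ℂ) ≠ 0 := by
    exact_mod_cast sqrt_two_pi_pos.ne'
  rw [inv_mul_eq_iff_eq_mul₀ hs]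
  have h2πc : ((2 * Real.pi : ℝ) : ℂ) = (Real.sqrt (2 * Real.pi) : ℂ) * (Real.sqrt (2 * Real.pi) : ℂ) := by
    exact_mod_cast (congrArg (Complex.ofReal) sq_sqrt_two_pi.symm)
  apply mul_left_cancel₀ hs
  rw [hcomp]
  rw [real_smul, h2πc]
  ring

variable {A : Type*} [CStarAlgebra A]

lemma norm_exp_smul_le (c : A) (hc : IsSelfAdjoint c) (t : ℝ) :
    ‖exp (((t : ℂ) * Complex.I) • c)‖ ≤ 1 := by
  rcases subsingleton_or_nontrivial A with h | h
  · simp [Subsingleton.elim (exp (((t : ℂ) * Complex.I) • c)) 0]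
  · have htc : IsSelfAdjoint ((t : ℂ) • c) := by
      rw [IsSelfAdjoint, star_smul, Complex.star_def, Complex.conj_ofReal, hc.star_eq]
    have hmem : Complex.I • ((t : ℂ) • c) ∈ skewAdjoint A :=
      htc.smul_mem_skewAdjoint (by simp [skewAdjoint.mem_iff])
    letI : NormedAlgebra ℚ A := .restrictScalars ℚ ℂ A
    have huni : exp (Complex.I • ((t : ℂ) • c)) ∈ unitary A :=
      exp_mem_unitary_of_mem_skewAdjoint hmem
    have : ((t : ℂ) * Complex.I) • c = Complex.I • ((t : ℂ) • c) := by
      rw [smul_smul, mul_comm]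
    rw [this, CStarRing.norm_of_mem_unitary huni]

lemma norm_exp_sub_exp_le (a r : A) (ha : IsSelfAdjoint a) (hr : IsSelfAdjoint r) (p : ℝ) :
    ‖exp (((p : ℂ) * Complex.I) • (a + r)) - exp (((p : ℂ) * Complex.I) • a)‖
      ≤ |p| * ‖r‖ := by
  set x : A := ((p : ℂ) * Complex.I) • (a + r) with hx
  set y : A := ((p : ℂ) * Complex.I) • a with hy
  set G : ℂ → A := fun w => exp (w • x) * exp ((1 - w) • y) with hG
  have hderiv : ∀ w : ℂ, HasDerivAt G
      (exp (w • x) * ((((p : ℂ) * Complex.I) • r) * exp ((1 - w) • y))) w := by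
    intro w
    have h1 := hasDerivAt_exp_smul_const (𝕂 := ℂ) x w
    have h3 := hasDerivAt_exp_smul_const (𝕂 := ℂ) y (1 - w)
    have h4 : HasDerivAt (fun w : ℂ => 1 - w) (-1) w := (hasDerivAt_id w).const_sub 1
    have h2 : HasDerivAt (fun w : ℂ => exp ((1 - w) • y))
        ((-1 : ℂ) • (exp ((1 - w) • y) * y)) w := h3.scomp w h4
    have h5 := h1.mul h2
    convert h5 using 1
    · rfl
    have hcomm : exp ((1 - w) • y) * y = y * exp ((1 - w) • y) :=
      (((Commute.refl y).smul_left (1 - w)).exp_left).eq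
    have hxy : x - y = ((p : ℂ) * Complex.I) • r := by
      rw [hx, hy, ← smul_sub, add_sub_cancel_left]
    rw [neg_one_smul, ← hxy, hcomm]
    noncomm_ring
  set F : ℝ → A := fun s => G s with hF
  have hFd : ∀ s ∈ Set.Icc (0:ℝ) 1, HasDerivWithinAt F
      (exp ((s : ℂ) • x) * ((((p : ℂ) * Complex.I) • r) * exp ((1 - (s : ℂ)) • y)))
      (Set.Icc 0 1) s := by
    intro s _
    have hofReal : HasDerivAt (fun s : ℝ => (s : ℂ)) 1 s := by
      simpa using (hasDerivAt_id s).ofReal_comp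
    have := (hderiv s).scomp s hofReal
    rw [one_smul] at this
    exact this.hasDerivWithinAt
  have hbound : ∀ s ∈ Set.Icc (0:ℝ) 1,
      ‖exp ((s : ℂ) • x) * ((((p : ℂ) * Complex.I) • r) * exp ((1 - (s : ℂ)) • y))‖
        ≤ |p| * ‖r‖ := by
    intro s hs
    have e1 : (s : ℂ) • x = (((s * p : ℝ) : ℂ) * Complex.I) • (a + r) := by
      rw [hx, smul_smul]
      push_cast
      ring_nf
    have e2 : (1 - (s : ℂ)) • y = ((((1 - s) * p : ℝ) : ℂ) * Complex.I) • a := by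
      rw [hy, smul_smul]
      push_cast
      ring_nf
    have n1 : ‖exp ((s : ℂ) • x)‖ ≤ 1 := by
      rw [e1]; exact norm_exp_smul_le (a + r) (ha.add hr) _
    have n2 : ‖exp ((1 - (s : ℂ)) • y)‖ ≤ 1 := by
      rw [e2]; exact norm_exp_smul_le a ha _
    have n3 : ‖(((p : ℂ) * Complex.I) • r)‖ = |p| * ‖r‖ := by
      rw [norm_smul, norm_mul, Complex.norm_real, Complex.norm_I, Real.norm_eq_abs, mul_one]
    calc ‖exp ((s : ℂ) • x) * ((((p : ℂ) * Complex.I) • r) * exp ((1 - (s : ℂ)) • y))‖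
        ≤ ‖exp ((s : ℂ) • x)‖ * (‖(((p : ℂ) * Complex.I) • r)‖ * ‖exp ((1 - (s : ℂ)) • y)‖) :=
          (norm_mul_le _ _).trans (by gcongr; exact norm_mul_le _ _)
      _ ≤ 1 * ((|p| * ‖r‖) * 1) := by
          refine mul_le_mul n1 ?_ (by positivity) zero_le_one
          exact mul_le_mul (le_of_eq n3) n2 (norm_nonneg _) (by positivity)
      _ = |p| * ‖r‖ := by ring
  have hmv := Convex.norm_image_sub_le_of_norm_hasDerivWithin_le hFd hbound
    (convex_Icc 0 1) (Set.left_mem_Icc.mpr zero_le_one) (Set.right_mem_Icc.mpr zero_le_one)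
  have hF1 : F 1 = exp x := by
    simp only [hF, hG, Complex.ofReal_one, one_smul, sub_self, zero_smul,
      NormedSpace.exp_zero, mul_one]
  have hF0 : F 0 = exp y := by
    simp only [hF, hG, Complex.ofReal_zero, zero_smul, NormedSpace.exp_zero, sub_zero,
      one_smul, one_mul]
  rw [hF1, hF0] at hmv
  simpa using hmv

/-- The cfc as a continuous linear map. -/
noncomputable def cfcCLM (c : A) (hc : IsStarNormal c) : C(spectrum ℂ c, ℂ) →L[ℂ] A :=
  { toLinearMap := (cfcHom hc (R := ℂ)).toLinearMap, cont := cfcHom_continuous hc }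

lemma cfcCLM_apply (c : A) (hc : IsStarNormal c) (g : C(spectrum ℂ c, ℂ)) :
    cfcCLM c hc g = cfcHom hc g := rfl

lemma representation (c : A) (hc : IsSelfAdjoint c) (f : ℝ → ℂ) (hf_cont : Continuous f)
    (hfhat_cont : Continuous (fourierHat f))
    (hfhat_int : Integrable (fourierHat f))
    (hinv : ∀ x : ℝ, (Real.sqrt (2 * Real.pi) : ℂ)⁻¹
      * ∫ p : ℝ, fourierHat f p * Complex.exp ((p : ℂ) * Complex.I * x) = f x) :
    cfc (fun z : ℂ => f z.re) c
      = ∫ p : ℝ, ((Real.sqrt (2 * Real.pi) : ℂ)⁻¹ * fourierHat f p)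
          • exp (((p : ℂ) * Complex.I) • c) := by
  have hnorm : IsStarNormal c := hc.isStarNormal
  set K := spectrum ℂ c with hK
  haveI : CompactSpace K := by
    rw [hK]
    infer_instance
  have hre : ∀ z : K, ((z : ℂ).re : ℂ) = (z : ℂ) := fun z =>
    (hc.mem_spectrum_eq_re z.2).symm
  set Φ : ℝ → C(K, ℂ) := fun p =>
    ⟨fun z => ((Real.sqrt (2 * Real.pi) : ℂ)⁻¹ * fourierHat f p)
        * Complex.exp (((p : ℂ) * Complex.I) * (z : ℂ)), by fun_prop⟩ with hΦ
  have hΦcont : Continuous Φ := by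
    let H : C(ℝ × K, ℂ) :=
      ⟨fun q => ((Real.sqrt (2 * Real.pi) : ℂ)⁻¹ * fourierHat f q.1)
        * Complex.exp (((q.1 : ℂ) * Complex.I) * (q.2 : ℂ)), by fun_prop⟩
    have : Φ = fun p => H.curry p := by
      funext p
      ext z
      rfl
    rw [this]
    exact H.curry.continuous
  have hnormval : ∀ p : ℝ, ‖Φ p‖ ≤ (Real.sqrt (2 * Real.pi))⁻¹ * ‖fourierHat f p‖ := by
    intro p
    refine (ContinuousMap.norm_le _ (by positivity)).mpr fun z => ?_
    show ‖((Real.sqrt (2 * Real.pi) : ℂ)⁻¹ * fourierHat f p)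
        * Complex.exp (((p : ℂ) * Complex.I) * (z : ℂ))‖
      ≤ (Real.sqrt (2 * Real.pi))⁻¹ * ‖fourierHat f p‖
    rw [norm_mul, norm_mul]
    have h1 : ‖((Real.sqrt (2 * Real.pi) : ℝ) : ℂ)⁻¹‖ = (Real.sqrt (2 * Real.pi))⁻¹ := by
      rw [norm_inv, Complex.norm_real, Real.norm_eq_abs, abs_of_pos sqrt_two_pi_pos]
    have h2 : ‖Complex.exp (((p : ℂ) * Complex.I) * (z : ℂ))‖ = 1 := by
      rw [← hre z, Complex.norm_exp]
      have : (((p : ℂ) * Complex.I) * ((z : ℂ).re : ℂ)).re = 0 := by simp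
      rw [this, Real.exp_zero]
    rw [h1, h2, mul_one]
  have hΦint : Integrable Φ := by
    refine Integrable.mono' (hfhat_int.norm.const_mul ((Real.sqrt (2 * Real.pi))⁻¹))
      hΦcont.aestronglyMeasurable (ae_of_all _ hnormval)
  have hfc : ContinuousOn (fun z : ℂ => f z.re) K :=
    (hf_cont.comp Complex.continuous_re).continuousOn
  have hint_eq : (∫ p : ℝ, Φ p) = ⟨_, hfc.restrict⟩ := by
    ext z
    have hev := (ContinuousMap.evalCLM ℂ z).integral_comp_comm hΦint
    have hev' : (∫ p : ℝ, Φ p) z = ∫ p : ℝ, Φ p z := hev.symm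
    rw [hev']
    show (∫ p : ℝ, Φ p z) = f (z : ℂ).re
    have : ∀ p : ℝ, Φ p z = (Real.sqrt (2 * Real.pi) : ℂ)⁻¹
        * (fourierHat f p * Complex.exp ((p : ℂ) * Complex.I * ((z : ℂ).re : ℂ))) := by
      intro p
      show ((Real.sqrt (2 * Real.pi) : ℂ)⁻¹ * fourierHat f p)
          * Complex.exp (((p : ℂ) * Complex.I) * (z : ℂ)) = _
      rw [mul_assoc, hre z]
    rw [funext this, integral_const_mul]
    exact hinv (z : ℂ).re
  have hΦexp : ∀ p : ℝ, cfcHom hnorm (Φ p)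
      = ((Real.sqrt (2 * Real.pi) : ℂ)⁻¹ * fourierHat f p)
        • exp (((p : ℂ) * Complex.I) • c) := by
    intro p
    set X : C(K, ℂ) := (ContinuousMap.id ℂ).restrict K with hX
    have hEp : Φ p = ((Real.sqrt (2 * Real.pi) : ℂ)⁻¹ * fourierHat f p)
        • exp ((((p : ℂ) * Complex.I)) • X) := by
      ext z
      have hev : (exp ((((p : ℂ) * Complex.I)) • X)) z
          = Complex.exp (((p : ℂ) * Complex.I) * (z : ℂ)) := by
        have hcont : Continuous (ContinuousMap.evalAlgHom ℂ ℂ z : C(K, ℂ) → ℂ) :=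
          continuous_eval_const z
        have := map_exp (ContinuousMap.evalAlgHom ℂ ℂ z) hcont (((p : ℂ) * Complex.I) • X)
        rw [Complex.exp_eq_exp_ℂ]
        simpa [hX] using this
      simp only [ContinuousMap.smul_apply, hev, smul_eq_mul]
      rfl
    rw [hEp, _root_.map_smul]
    congr 1
    letI : NormedAlgebra ℚ A := .restrictScalars ℚ ℂ A
    have := map_exp (cfcHom hnorm (R := ℂ)) (cfcHom_continuous hnorm)
      (((p : ℂ) * Complex.I) • X)
    rw [this, _root_.map_smul, cfcHom_id hnorm]
  rw [cfc_apply (fun z : ℂ => f z.re) c hnorm hfc, ← hint_eq]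
  have hcomm := (cfcCLM c hnorm).integral_comp_comm hΦint
  rw [← cfcCLM_apply, ← hcomm]
  refine congrArg (integral volume) (funext fun p => ?_)
  rw [cfcCLM_apply]
  exact hΦexp p

lemma integrand_integrable (c : A) (f : ℝ → ℂ) (hc : IsSelfAdjoint c)
    (hfhat_cont : Continuous (fourierHat f)) (hfhat_int : Integrable (fourierHat f)) :
    Integrable (fun p : ℝ => ((Real.sqrt (2 * Real.pi) : ℂ)⁻¹ * fourierHat f p)
      • exp (((p : ℂ) * Complex.I) • c)) := by
  have hcont : Continuous (fun p : ℝ => ((Real.sqrt (2 * Real.pi) : ℂ)⁻¹ * fourierHat f p)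
      • exp (((p : ℂ) * Complex.I) • c)) := by
    letI : NormedAlgebra ℚ A := .restrictScalars ℚ ℂ A
    refine (continuous_const.mul hfhat_cont).smul (exp_continuous.comp ?_)
    exact (Complex.continuous_ofReal.mul continuous_const).smul continuous_const
  refine Integrable.mono' (hfhat_int.norm.const_mul ((Real.sqrt (2 * Real.pi))⁻¹))
    hcont.aestronglyMeasurable (ae_of_all _ fun p => ?_)
  rw [norm_smul, norm_mul]
  have h1 : ‖((Real.sqrt (2 * Real.pi) : ℝ) : ℂ)⁻¹‖ = (Real.sqrt (2 * Real.pi))⁻¹ := by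
    rw [norm_inv, Complex.norm_real, Real.norm_eq_abs, abs_of_pos sqrt_two_pi_pos]
  rw [h1, mul_assoc]
  refine mul_le_mul_of_nonneg_left ?_ (by positivity)
  calc ‖fourierHat f p‖ * ‖exp (((p : ℂ) * Complex.I) • c)‖
      ≤ ‖fourierHat f p‖ * 1 :=
        mul_le_mul_of_nonneg_left (norm_exp_smul_le c hc p) (norm_nonneg _)
    _ = ‖fourierHat f p‖ := mul_one _

end NormCfcPerturbation

open NormCfcPerturbation Complex NormedSpace in
/-- **perturbation estimate.** For selfadjoint elements `a`, `r` of a unital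
complex C*-algebra and a bounded continuous integrable `f : ℝ → ℂ` with `p·f̂(p)` integrable,
`‖f(a + r) − f(a)‖ ≤ (2π)^{-1/2} · ‖r‖ · ∫ |p·f̂(p)| dp`. -/
theorem norm_cfc_perturbation_le
    {A : Type*} [CStarAlgebra A] (a r : A) (ha : IsSelfAdjoint a) (hr : IsSelfAdjoint r)
    (f : ℝ → ℂ) (hf_cont : Continuous f) (hf_bdd : ∃ C : ℝ, ∀ x : ℝ, ‖f x‖ ≤ C)
    (hf_int : Integrable f)
    (hphat_int : Integrable (fun p : ℝ => (p : ℂ) * fourierHat f p)) :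
    ‖cfc (fun z : ℂ => f z.re) (a + r) - cfc (fun z : ℂ => f z.re) a‖
      ≤ (Real.sqrt (2 * Real.pi))⁻¹ * ‖r‖ * ∫ p : ℝ, ‖(p : ℂ) * fourierHat f p‖ := by
  have hfhat_cont : Continuous (fourierHat f) := fourierHat_continuous hf_int
  have hfhat_int : Integrable (fourierHat f) := fourierHat_integrable hf_int hphat_int
  have hinv := fourierHat_inversion hf_cont hf_int hphat_int
  have hb : IsSelfAdjoint (a + r) := ha.add hr
  rw [representation (a + r) hb f hf_cont hfhat_cont hfhat_int hinv,
    representation a ha f hf_cont hfhat_cont hfhat_int hinv]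
  have hIb := integrand_integrable (a + r) f hb hfhat_cont hfhat_int
  have hIa := integrand_integrable a f ha hfhat_cont hfhat_int
  rw [← integral_sub hIb hIa]
  have hDint : Integrable (fun p : ℝ =>
      ((Real.sqrt (2 * Real.pi))⁻¹ * ‖r‖) * ‖(p : ℂ) * fourierHat f p‖) :=
    hphat_int.norm.const_mul _
  refine le_trans (norm_integral_le_of_norm_le hDint (ae_of_all _ fun p => ?_)) (le_of_eq ?_)
  · rw [← smul_sub, norm_smul, norm_mul]
    have h1 : ‖((Real.sqrt (2 * Real.pi) : ℝ) : ℂ)⁻¹‖ = (Real.sqrt (2 * Real.pi))⁻¹ := by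
      rw [norm_inv, Complex.norm_real, Real.norm_eq_abs, abs_of_pos sqrt_two_pi_pos]
    have h2 : ‖(p : ℂ) * fourierHat f p‖ = |p| * ‖fourierHat f p‖ := by
      rw [norm_mul, Complex.norm_real, Real.norm_eq_abs]
    have h3 := norm_exp_sub_exp_le a r ha hr p
    rw [h1, h2]
    calc (Real.sqrt (2 * Real.pi))⁻¹ * ‖fourierHat f p‖
          * ‖exp (((p : ℂ) * Complex.I) • (a + r)) - exp (((p : ℂ) * Complex.I) • a)‖
        ≤ (Real.sqrt (2 * Real.pi))⁻¹ * ‖fourierHat f p‖ * (|p| * ‖r‖) := by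
          refine mul_le_mul_of_nonneg_left h3 (by positivity)
      _ = (Real.sqrt (2 * Real.pi))⁻¹ * ‖r‖ * (|p| * ‖fourierHat f p‖) := by ring
  · exact integral_const_mul ((Real.sqrt (2 * Real.pi))⁻¹ * ‖r‖)
      (fun p : ℝ => ‖(p : ℂ) * fourierHat f p‖)
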